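/- Let σ and γ be real constants satisfying (σ = 4 and γ ≥ 2) or (σ > 4 and γ > 2σ/(σ + √(σ² − 4σ))). For arbitrary ū_h ∈ U, ȳ_h ∈ Y, w̄_h ∈ W define the residuals ρ_w := C*(Cȳ_h − g^δ) + A*w̄_h ∈ Y*, ρ_u := αū_h − B*w̄_h ∈ U, and ρ_y := Aȳ_h − Bū_h ∈ W*. Then α‖ū_h − ū‖_U² + ‖Cȳ_h − Cȳ‖_G² ≤ (γ/α)‖B*((A*)⁻¹ρ_w) + ρ_u‖_U² + σ‖C(A⁻¹ρ_y)‖_G². -/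

import Mathlib

open RealInnerProductSpace NormedSpace

private lemma expand_sq {E : Type*} [NormedAddCommGroup E] [InnerProductSpace ℝ E]
    (x y : E) (t : ℝ) :
    ‖x + t • y‖^2 = ‖x‖^2 + 2*t*⟪x, y⟫ + t^2*‖y‖^2 := by
  rw [norm_add_sq_real, real_inner_smul_right, norm_smul, mul_pow, Real.norm_eq_abs, sq_abs]
  ring

private lemma young {α : ℝ} (hα : 0 < α) (x y : ℝ) : x * y ≤ x^2/(2*α) + α * y^2/2 := by
  have h2α : (0:ℝ) < 2*α := by linarith
  have h : x*y ≤ (x^2 + α^2*y^2)/(2*α) := by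
    rw [le_div_iff₀ h2α]; nlinarith [sq_nonneg (x - α*y)]
  have heq : (x^2 + α^2*y^2)/(2*α) = x^2/(2*α) + α*y^2/2 := by
    field_simp
  linarith [h, heq.le, heq.ge]

private lemma quad_nonneg_imp {a b : ℝ} (hb : 0 ≤ b) (h : ∀ t : ℝ, 0 ≤ a * t + b * t^2) :
    a = 0 := by
  have hb1 : (0:ℝ) < b + 1 := by linarith
  have h1 := h (-a / (b + 1))
  have h2 : a * (-a / (b+1)) + b * (-a / (b+1))^2 = -a^2 / (b+1)^2 := by
    field_simp
    ring
  rw [h2] at h1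
  have : a^2 ≤ 0 := by
    have := (div_nonneg_iff.mp (by linarith [h1] : (0:ℝ) ≤ -a^2 / (b+1)^2))
    rcases this with ⟨h3, _⟩ | ⟨_, h4⟩
    · linarith
    · nlinarith
  nlinarith [sq_nonneg a]

set_option maxHeartbeats 1000000 in
/-- A posteriori error estimate for Hilbert-space Tikhonov regularization of a
PDE-constrained problem, in terms of the residuals of the optimality system. -/
theorem stmt_3
    {U G Y W : Type*}
    [NormedAddCommGroup U] [InnerProductSpace ℝ U] [CompleteSpace U]
    [NormedAddCommGroup G] [InnerProductSpace ℝ G] [CompleteSpace G]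
    [NormedAddCommGroup Y] [NormedSpace ℝ Y] [CompleteSpace Y]
    [NormedAddCommGroup W] [NormedSpace ℝ W] [CompleteSpace W]
    (A : Y ≃L[ℝ] StrongDual ℝ W) (Astar : W ≃L[ℝ] StrongDual ℝ Y)
    (hAadj : ∀ (y : Y) (w : W), A y w = Astar w y)
    (B : U →L[ℝ] StrongDual ℝ W) (Bstar : W →L[ℝ] U)
    (hBadj : ∀ (u : U) (w : W), B u w = ⟪u, Bstar w⟫)
    (C : Y →L[ℝ] G) (Cstar : G →L[ℝ] StrongDual ℝ Y)
    (hCadj : ∀ (y : Y) (g : G), ⟪C y, g⟫ = Cstar g y)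
    (gδ : G) (α : ℝ) (hα : 0 < α)
    (Jα : U → Y → ℝ)
    (hJ : ∀ u y, Jα u y = (1/2) * ‖C y - gδ‖^2 + (α/2) * ‖u‖^2)
    (ubar : U) (ybar : Y) (hybar : ybar = A.symm (B ubar))
    (hmin : ∀ u : U, Jα ubar ybar ≤ Jα u (A.symm (B u)))
    (σ γ : ℝ)
    (hσγ : (σ = 4 ∧ 2 ≤ γ) ∨
      (4 < σ ∧ 2 * σ / (σ + Real.sqrt (σ^2 - 4*σ)) < γ))
    (uh : U) (yh : Y) (wh : W) :
    α * ‖uh - ubar‖^2 + ‖C yh - C ybar‖^2 ≤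
      (γ/α) * ‖Bstar (Astar.symm (Cstar (C yh - gδ) + Astar wh)) + (α • uh - Bstar wh)‖^2
      + σ * ‖C (A.symm (A yh - B uh))‖^2 := by
  -- abbreviations
  set e : U := uh - ubar with he
  set η : G := C yh - C ybar with hη
  set d : G := C (A.symm (A yh - B uh)) with hd
  set r : U := Bstar (Astar.symm (Cstar (C yh - gδ) + Astar wh)) + (α • uh - Bstar wh) with hr
  -- adjoint identity: ⟪C (A.symm (B u)), g'⟫ = ⟪u, Bstar (Astar.symm (Cstar g'))⟫
  have hadj : ∀ (u : U) (g' : G),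
      ⟪C (A.symm (B u)), g'⟫ = ⟪u, Bstar (Astar.symm (Cstar g'))⟫ := by
    intro u g'
    rw [hCadj]
    have h1 : Cstar g' (A.symm (B u)) = Astar (Astar.symm (Cstar g')) (A.symm (B u)) := by
      rw [Astar.apply_symm_apply]
    rw [h1, ← hAadj, A.apply_symm_apply, hBadj]
  -- first-order optimality condition
  have hopt : Bstar (Astar.symm (Cstar (C ybar - gδ))) + α • ubar = 0 := by
    set k : U := Bstar (Astar.symm (Cstar (C ybar - gδ))) + α • ubar with hk
    have key : ∀ v : U, ⟪k, v⟫ = 0 := by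
      intro v
      set a : ℝ := 2 * (⟪C ybar - gδ, C (A.symm (B v))⟫ + α * ⟪ubar, v⟫) with ha
      set b : ℝ := ‖C (A.symm (B v))‖^2 + α * ‖v‖^2 with hb
      have hbnn : 0 ≤ b := by positivity
      have hq : ∀ t : ℝ, 0 ≤ a * t + b * t^2 := by
        intro t
        have h := hmin (ubar + t • v)
        rw [hJ, hJ] at h
        have key1 : C (A.symm (B (ubar + t • v))) - gδ
            = (C ybar - gδ) + t • (C (A.symm (B v))) := by
          rw [hybar]
          simp only [map_add, map_smul]
          abel
        rw [key1, expand_sq, expand_sq ubar v t] at h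
        rw [ha, hb]
        nlinarith [h]
      have ha0 : a = 0 := quad_nonneg_imp hbnn hq
      have : ⟪C ybar - gδ, C (A.symm (B v))⟫ + α * ⟪ubar, v⟫ = 0 := by
        rw [ha] at ha0; linarith
      have hv : ⟪Bstar (Astar.symm (Cstar (C ybar - gδ))), v⟫
          = ⟪C ybar - gδ, C (A.symm (B v))⟫ := by
        rw [real_inner_comm, ← hadj v (C ybar - gδ), real_inner_comm]
      rw [hk, inner_add_left, real_inner_smul_left, hv]
      linarith [this]
    have := key k
    exact inner_self_eq_zero.mp this
  -- simplify r
  have hr2 : r = Bstar (Astar.symm (Cstar η)) + α • e := by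
    rw [hr]
    have h1 : Astar.symm (Cstar (C yh - gδ) + Astar wh)
        = Astar.symm (Cstar (C yh - gδ)) + wh := by
      rw [map_add, Astar.symm_apply_apply]
    rw [h1, map_add]
    have h2 : Cstar (C yh - gδ) = Cstar η + Cstar (C ybar - gδ) := by
      rw [hη, ← map_add]
      congr 1
      abel
    rw [h2, map_add, map_add]
    have h3 : α • uh = α • e + α • ubar := by rw [he, smul_sub]; abel
    rw [h3]
    have : Bstar (Astar.symm (Cstar (C ybar - gδ))) + α • ubar = 0 := hopt
    -- rearrange
    have goal : Bstar (Astar.symm (Cstar η)) + Bstar (Astar.symm (Cstar (C ybar - gδ)))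
        + Bstar wh + (α • e + α • ubar - Bstar wh)
        = Bstar (Astar.symm (Cstar η)) + α • e
          + (Bstar (Astar.symm (Cstar (C ybar - gδ))) + α • ubar) := by abel
    rw [goal, this, add_zero]
  -- S e = η - d
  have hSe : C (A.symm (B e)) = η - d := by
    rw [he, hd, hη, hybar]
    simp only [map_sub, ContinuousLinearEquiv.symm_apply_apply]
    abel
  -- key inner product identity
  have hre : ⟪r, e⟫ = ‖η‖^2 - ⟪d, η⟫ + α * ‖e‖^2 := by
    rw [hr2, inner_add_left, real_inner_smul_left, real_inner_self_eq_norm_sq]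
    have h1 : ⟪Bstar (Astar.symm (Cstar η)), e⟫ = ⟪η - d, η⟫ := by
      rw [real_inner_comm, ← hadj e η, hSe]
    rw [h1, inner_sub_left, real_inner_self_eq_norm_sq, real_inner_comm η d]
    try ring
  clear_value e η d r
  -- Cauchy-Schwarz + Young
  have hcs1 : ⟪r, e⟫ ≤ ‖r‖ * ‖e‖ := real_inner_le_norm r e
  have hcs2 : ⟪d, η⟫ ≤ ‖d‖ * ‖η‖ := real_inner_le_norm d η
  have hmain : α * ‖e‖^2 + ‖η‖^2 ≤ (1/α) * ‖r‖^2 + ‖d‖^2 := by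
    have h1 : α * ‖e‖^2 + ‖η‖^2 = ⟪r, e⟫ + ⟪d, η⟫ := by rw [hre]; ring
    have hy1 : ‖r‖ * ‖e‖ ≤ ‖r‖^2/(2*α) + α * ‖e‖^2/2 := young hα ‖r‖ ‖e‖
    have hy2 : ‖d‖ * ‖η‖ ≤ ‖d‖^2/2 + ‖η‖^2/2 := by
      have := young one_pos ‖d‖ ‖η‖
      linarith [this]
    have hx : (1/α) * ‖r‖^2 = 2 * (‖r‖^2/(2*α)) := by
      field_simp
    linarith [hcs1, hcs2, h1, hx]
  -- γ ≥ 1 and σ ≥ 1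
  have hγ1 : 1 ≤ γ := by
    rcases hσγ with ⟨hσ, hγ⟩ | ⟨hσ, hγ⟩
    · linarith
    · have hσ0 : 0 < σ := by linarith
      have hsq : Real.sqrt (σ^2 - 4*σ) ≤ σ := by
        calc Real.sqrt (σ^2 - 4*σ) ≤ Real.sqrt (σ^2) := Real.sqrt_le_sqrt (by nlinarith)
          _ = σ := Real.sqrt_sq (le_of_lt hσ0)
      have hden : 0 < σ + Real.sqrt (σ^2 - 4*σ) :=
        lt_of_lt_of_le hσ0 (by linarith [Real.sqrt_nonneg (σ^2 - 4*σ)])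
      have : 1 ≤ 2 * σ / (σ + Real.sqrt (σ^2 - 4*σ)) := by
        rw [le_div_iff₀ hden]; linarith
      linarith
  have hσ1 : 1 ≤ σ := by rcases hσγ with ⟨hσ, _⟩ | ⟨hσ, _⟩ <;> linarith
  -- conclude
  have hr2nn : 0 ≤ ‖r‖^2 := sq_nonneg _
  have hd2nn : 0 ≤ ‖d‖^2 := sq_nonneg _
  have h1α : (1/α) * ‖r‖^2 ≤ (γ/α) * ‖r‖^2 :=
    mul_le_mul_of_nonneg_right ((div_le_div_iff_of_pos_right hα).mpr hγ1) hr2nn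
  linarith [hmain, mul_le_mul_of_nonneg_right hσ1 hd2nn]
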